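/- Let G and G' be term graphs over Σλ^{1,2} such that G is a λ-term-graph over Σλ^{1,2} and there is a homomorphism h from G to G'. If G is fully back-linked, then G' is also a λ-term-graph over Σλ^{1,2} (i.e. admits a correct abstraction-prefix function), and G' is fully back-linked. If moreover G is an eager-scope λ-term-graph, then so is G'. Consequently, the class of eager-scope λ-term-graphs over Σλ^{1,2} is closed under functional bisimulation: if G is an eager-scope λ-term-graph over Σλ^{1,2} and G ⥲ G' for a Σλ^{1,2}-term-graph G', then G' is an eager-scope λ-term-graph over Σλ^{1,2}. -/

import Mathlib

/-! Common framework: term graphs over a signature, homomorphisms, bisimulations,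
    access paths, λ-ho-term-graphs, λ-ap-ho-term-graphs, λ-term-graphs with
    scope delimiters, and the translation constructions. -/

inductive Lab3 : Type
  | app | lam | var
  deriving DecidableEq

/-- Arity function of the signature Σλ^i = {@, λ, 0} with ar(@)=2, ar(λ)=1, ar(0)=i. -/
def ar3 (i : ℕ) : Lab3 → ℕ
  | .app => 2
  | .lam => 1
  | .var => i

inductive Lab4 : Type
  | app | lam | var | del
  deriving DecidableEq

/-- Arity function of Σλ^{i,j} = {@, λ, 0, S} with ar(@)=2, ar(λ)=1, ar(0)=i, ar(S)=j. -/
def ar4 (i j : ℕ) : Lab4 → ℕ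
  | .app => 2
  | .lam => 1
  | .var => i
  | .del => j

def lab3to4 : Lab3 → Lab4
  | .app => .app
  | .lam => .lam
  | .var => .var

def lab4to3 : Lab4 → Lab3
  | .app => .app
  | .lam => .lam
  | .var => .var
  | .del => .var

/-- A term graph over a signature: vertex labelling, argument (successor) lists of
    length matching the arity of the label, a root, and every vertex reachable
    from the root. -/
structure TermGraph (L : Type) (ar : L → ℕ) (V : Type) where
  lab : V → L
  args : V → List V
  root : V
  args_len : ∀ v, (args v).length = ar (lab v)
  reach : ∀ v, Relation.ReflTransGen (fun a b => b ∈ args a) root v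

namespace TermGraph

variable {L V : Type} {ar : L → ℕ}

/-- `G.Succ k w w'` : `w'` is the `k`-th successor of `w` (the edge w ↣_k w'). -/
def Succ (G : TermGraph L ar V) (k : ℕ) (w w' : V) : Prop :=
  (G.args w)[k]? = some w'

/-- `G.Edge w w'` : `w'` is some successor of `w` (the relation ↣). -/
def Edge (G : TermGraph L ar V) (w w' : V) : Prop :=
  w' ∈ G.args w

/-- Reachability ↠ along edges. -/
def Reaches (G : TermGraph L ar V) (w w' : V) : Prop :=
  Relation.ReflTransGen G.Edge w w'

end TermGraph

/-- Homomorphism (functional bisimulation) of term graphs. -/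
def IsHom {L V₁ V₂ : Type} {ar : L → ℕ} (h : V₁ → V₂)
    (G₁ : TermGraph L ar V₁) (G₂ : TermGraph L ar V₂) : Prop :=
  (∀ v, G₂.lab (h v) = G₁.lab v) ∧
  (∀ v, G₂.args (h v) = (G₁.args v).map h) ∧
  h G₁.root = G₂.root

/-- Bisimulation between term graphs: a term graph on a set of pairs, rooted at the
    pair of roots, whose two projections are homomorphisms. -/
def Bisim {L V₁ V₂ : Type} {ar : L → ℕ}
    (G₁ : TermGraph L ar V₁) (G₂ : TermGraph L ar V₂) : Prop :=
  ∃ (S : Set (V₁ × V₂)) (R : TermGraph L ar S),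
    (R.root : V₁ × V₂) = (G₁.root, G₂.root) ∧
    IsHom (fun x : S => x.val.1) R G₁ ∧
    IsHom (fun x : S => x.val.2) R G₂

/-- An access path of a vertex `w`: a path from the root to `w` (with edge indices)
    that visits no vertex twice. -/
structure AccessPath {L V : Type} {ar : L → ℕ} (G : TermGraph L ar V) (w : V) where
  n : ℕ
  vs : Fin (n + 1) → V
  ks : Fin n → ℕ
  start : vs 0 = G.root
  finish : vs (Fin.last n) = w
  step : ∀ m : Fin n, G.Succ (ks m) (vs m.castSucc) (vs m.succ)
  inj : Function.Injective vs

/-- The conditions (root), (self), (nest), (closed), (scope)₀ and (for i = 1) (scope)₁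
    on a scope function. -/
def ScopeConds (i : ℕ) {V : Type} (G : TermGraph Lab3 (ar3 i) V)
    (Sc : V → Set V) : Prop :=
  (∀ v, G.lab v = .lam → G.root ∉ Sc v \ {v}) ∧
  (∀ v, G.lab v = .lam → v ∈ Sc v) ∧
  (∀ v₀ v₁, G.lab v₀ = .lam → G.lab v₁ = .lam → v₁ ∈ Sc v₀ \ {v₀} →
      Sc v₁ ⊆ Sc v₀ \ {v₀}) ∧
  (∀ v w wk k, G.lab v = .lam → G.Succ k w wk → wk ∈ Sc v \ {v} → w ∈ Sc v) ∧
  (∀ w, G.lab w = .var → ∃ v, G.lab v = .lam ∧ w ∈ Sc v \ {v}) ∧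
  (i = 1 → ∀ w w₀, G.lab w = .var → G.Succ 0 w w₀ →
      G.lab w₀ = .lam ∧ ∀ v, G.lab v = .lam → (w ∈ Sc v ↔ w₀ ∈ Sc v))

/-- λ-ho-term-graph over Σλ^i: a Σλ^i-term-graph endowed with a scope function. -/
structure LamHoTG (i : ℕ) (V : Type) extends TermGraph Lab3 (ar3 i) V where
  Sc : V → Set V
  conds : ScopeConds i toTermGraph Sc

/-- Correctness of an abstraction-prefix function for a Σλ^i-term-graph:
    (root), (λ), (@), (0)₀, and (for i = 1) (0)₁. -/
def CorrectAP (i : ℕ) {V : Type} (G : TermGraph Lab3 (ar3 i) V)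
    (P : V → List V) : Prop :=
  (P G.root = []) ∧
  (∀ w w₀, G.lab w = .lam → G.Succ 0 w w₀ → P w₀ <+: P w ++ [w]) ∧
  (∀ w wk k, G.lab w = .app → G.Succ k w wk → P wk <+: P w) ∧
  (∀ w, G.lab w = .var → P w ≠ []) ∧
  (i = 1 → ∀ w w₀, G.lab w = .var → G.Succ 0 w w₀ →
      G.lab w₀ = .lam ∧ P w₀ ++ [w₀] = P w)

/-- λ-ap-ho-term-graph over Σλ^i: a Σλ^i-term-graph endowed with a correct
    abstraction-prefix function. -/
structure LamApHoTG (i : ℕ) (V : Type) extends TermGraph Lab3 (ar3 i) V where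
  P : V → List V
  correct : CorrectAP i toTermGraph P

/-- `ScToP G Sc P` : the abstraction-prefix function `P` is the one obtained from the
    scope function `Sc` by the mapping A_i: for each vertex `w`, `P w` lists exactly
    the binders of `w` other than `w` itself, in order of strictly decreasing scopes. -/
def ScToP {i : ℕ} {V : Type} (G : TermGraph Lab3 (ar3 i) V)
    (Sc : V → Set V) (P : V → List V) : Prop :=
  ∀ w, (∀ v, v ∈ P w ↔ (G.lab v = .lam ∧ w ∈ Sc v ∧ v ≠ w)) ∧
    (P w).Chain' (fun a b => Sc b ⊂ Sc a)

/-- The scope function obtained from an abstraction-prefix function by the mapping B_i: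
    Sc(v) = { w | v occurs in P(w) } ∪ {v}. -/
def ScOfP {V : Type} (P : V → List V) : V → Set V :=
  fun v => {w | v ∈ P w} ∪ {v}

/-- Homomorphism of λ-ho-term-graphs (given by their underlying term graphs and
    scope functions). -/
def IsHoHom {i : ℕ} {V₁ V₂ : Type} (h : V₁ → V₂)
    (G₁ : TermGraph Lab3 (ar3 i) V₁) (Sc₁ : V₁ → Set V₁)
    (G₂ : TermGraph Lab3 (ar3 i) V₂) (Sc₂ : V₂ → Set V₂) : Prop :=
  IsHom h G₁ G₂ ∧ ∀ v, G₁.lab v = .lam → h '' Sc₁ v = Sc₂ (h v)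

/-- Homomorphism of λ-ap-ho-term-graphs (given by their underlying term graphs and
    abstraction-prefix functions). -/
def IsApHom {i : ℕ} {V₁ V₂ : Type} (h : V₁ → V₂)
    (G₁ : TermGraph Lab3 (ar3 i) V₁) (P₁ : V₁ → List V₁)
    (G₂ : TermGraph Lab3 (ar3 i) V₂) (P₂ : V₂ → List V₂) : Prop :=
  IsHom h G₁ G₂ ∧ ∀ v, (P₁ v).map h = P₂ (h v)

/-- Correctness of an abstraction-prefix function for a Σλ^{i,j}-term-graph:
    (root), (λ), (@), (0)₀, (0)₁ (for i = 1), (S)₁, and (S)₂ (for j = 2). -/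
def CorrectAP4 (i j : ℕ) {V : Type} (G : TermGraph Lab4 (ar4 i j) V)
    (P : V → List V) : Prop :=
  (P G.root = []) ∧
  (∀ w w₀, G.lab w = .lam → G.Succ 0 w w₀ → P w₀ = P w ++ [w]) ∧
  (∀ w wk k, G.lab w = .app → G.Succ k w wk → P wk = P w) ∧
  (∀ w, G.lab w = .var → P w ≠ []) ∧
  (i = 1 → ∀ w w₀, G.lab w = .var → G.Succ 0 w w₀ →
      G.lab w₀ = .lam ∧ P w₀ ++ [w₀] = P w) ∧
  (∀ w w₀, G.lab w = .del → G.Succ 0 w w₀ → ∃ v, P w₀ ++ [v] = P w) ∧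
  (j = 2 → ∀ w w₁, G.lab w = .del → G.Succ 1 w w₁ →
      G.lab w₁ = .lam ∧ P w₁ ++ [w₁] = P w)

/-- Vertex-set predicate of the construction G_i^j: original vertices (inl) together
    with scope-delimiter vertices (w, k, w', p) inserted along an edge w ↣_k w',
    one for each prefix p with P(w') < p ≤ P(w)·w (for λ-vertices w),
    resp. P(w') < p ≤ P(w) (for @-vertices w). -/
def GVP {i : ℕ} {V : Type} (G : TermGraph Lab3 (ar3 i) V) (P : V → List V) :
    V ⊕ (V × ℕ × V × List V) → Prop
  | .inl _ => True
  | .inr (w, k, w', p) =>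
      G.Succ k w w' ∧ P w' <+: p ∧ P w' ≠ p ∧
      ((G.lab w = .lam ∧ p <+: P w ++ [w]) ∨ (G.lab w = .app ∧ p <+: P w))

/-- Vertex set of the image of G_i^j. -/
def GVert {i : ℕ} {V : Type} (G : TermGraph Lab3 (ar3 i) V) (P : V → List V) : Type :=
  { x : V ⊕ (V × ℕ × V × List V) // GVP G P x }

/-- Labelling of the image of G_i^j: original labels on original vertices,
    `S` on the inserted delimiter vertices. -/
def GLab {i : ℕ} {V : Type} (G : TermGraph Lab3 (ar3 i) V) (P : V → List V)
    (x : GVert G P) : Lab4 :=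
  match x.val with
  | .inl w => lab3to4 (G.lab w)
  | .inr _ => .del

/-- The successor relation of the image of G_i^j (clauses as in the definition of
    the mapping G_i^j; for j = 2 the inserted S-vertices carry a 1-indexed back-link
    to the abstraction vertex whose extended scope they close). -/
def CSucc {i : ℕ} {V : Type} (j : ℕ) (G : TermGraph Lab3 (ar3 i) V) (P : V → List V)
    (k : ℕ) (x y : GVert G P) : Prop :=
  (∃ w wk, x.val = .inl w ∧ y.val = .inl wk ∧ G.Succ k w wk ∧
     (G.lab w = .var ∨ (G.lab w = .lam ∧ P wk = P w ++ [w]) ∨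
      (G.lab w = .app ∧ P wk = P w))) ∨
  (∃ w w₀, x.val = .inl w ∧ G.lab w = .lam ∧ G.Succ 0 w w₀ ∧ P w₀ ≠ P w ++ [w] ∧
     k = 0 ∧ y.val = .inr (w, 0, w₀, P w ++ [w])) ∨
  (∃ w wk, x.val = .inl w ∧ G.lab w = .app ∧ G.Succ k w wk ∧ P wk ≠ P w ∧
     y.val = .inr (w, k, wk, P w)) ∨
  (∃ w k' w' p v, x.val = .inr (w, k', w', p ++ [v]) ∧ k = 0 ∧ P w' ≠ p ∧
     y.val = .inr (w, k', w', p)) ∨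
  (∃ w k' w' v, x.val = .inr (w, k', w', P w' ++ [v]) ∧ k = 0 ∧ y.val = .inl w') ∨
  (j = 2 ∧ ∃ w k' w' p v, x.val = .inr (w, k', w', p ++ [v]) ∧ k = 1 ∧ y.val = .inl v)

/-- `IsGImage i j G P G'` : the Σλ^{i,j}-term-graph `G'` is the image of the
    λ-ap-ho-term-graph given by `G` and `P` under the mapping G_i^j. -/
def IsGImage (i j : ℕ) {V : Type} (G : TermGraph Lab3 (ar3 i) V) (P : V → List V)
    (G' : TermGraph Lab4 (ar4 i j) (GVert G P)) : Prop :=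
  (G'.root).val = .inl G.root ∧
  (∀ x, G'.lab x = GLab G P x) ∧
  (∀ k x y, G'.Succ k x y ↔ CSucc j G P k x y)

/-- One step along the 0-indexed edge of a scope-delimiter vertex. -/
def DelStep {i j : ℕ} {V : Type} (G : TermGraph Lab4 (ar4 i j) V) (a b : V) : Prop :=
  G.lab a = .del ∧ G.Succ 0 a b

/-- The non-delimiter vertices of a Σλ^{i,j}-term-graph. -/
def NVert {i j : ℕ} {V : Type} (G : TermGraph Lab4 (ar4 i j) V) : Type :=
  { v : V // G.lab v ≠ .del }

/-- `IsNImage i j G P G' P'` : the Σλ^i-term-graph `G'` with abstraction-prefix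
    function `P'` is the image of the λ-term-graph `G` (with correct prefix
    function `P`) under the mapping N_i^j: S-vertices are deleted, labels and the
    prefix function are restricted, the root is kept, and w₀ ↣'_k w₁ holds iff
    w₁ is reached from the k-th successor of w₀ by passing through finitely many
    S-vertices along their 0-indexed edges. -/
def IsNImage (i j : ℕ) {V : Type} (G : TermGraph Lab4 (ar4 i j) V) (P : V → List V)
    (G' : TermGraph Lab3 (ar3 i) (NVert G)) (P' : NVert G → List (NVert G)) : Prop :=
  (G'.root).val = G.root ∧
  (∀ x : NVert G, G'.lab x = lab4to3 (G.lab x.val)) ∧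
  (∀ k (a b : NVert G), G'.Succ k a b ↔
      ∃ u, G.Succ k a.val u ∧ Relation.ReflTransGen (DelStep G) u b.val) ∧
  (∀ v : NVert G, (P' v).map Subtype.val = P v.val)

/-- A λ-term-graph over Σλ^{1,2} (given by `G` with correct prefix function `P`) is
    fully back-linked if the last vertex of the abstraction prefix of any vertex `w`
    is reachable from `w`. -/
def FullyBackLinked {V : Type} (G : TermGraph Lab4 (ar4 1 2) V)
    (P : V → List V) : Prop :=
  ∀ w v p, P w = p ++ [v] → G.Reaches w v

/-- Eager-scope: whenever P(w) = p·v there is a path from `w` to `v` which ends with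
    a 0-indexed edge from a variable vertex to `v`, and all of whose intermediate
    vertices have abstraction prefixes extending P(w). -/
def EagerScope {V : Type} (G : TermGraph Lab4 (ar4 1 2) V)
    (P : V → List V) : Prop :=
  ∀ w v p, P w = p ++ [v] →
    ∃ (n : ℕ) (u : Fin (n + 1) → V),
      u 0 = w ∧
      (∀ m : Fin n, G.Edge (u m.castSucc) (u m.succ)) ∧
      G.Succ 0 (u (Fin.last n)) v ∧
      G.lab (u (Fin.last n)) = .var ∧
      ∀ m : Fin (n + 1), m ≠ 0 → P w <+: P (u m)

section Proofs

open Relation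

variable {V V' : Type} {G : TermGraph Lab4 (ar4 1 2) V} {P : V → List V}
  {G' : TermGraph Lab4 (ar4 1 2) V'} {h : V → V'}

private lemma concat_eq_concat' {α : Type} {l₁ l₂ : List α} {a b : α}
    (e : l₁ ++ [a] = l₂ ++ [b]) : l₁ = l₂ ∧ a = b := by
  have h1 := congrArg List.dropLast e
  have h2 := congrArg List.getLast? e
  simp at h1 h2
  exact ⟨h1, h2⟩

private lemma eq_nil_or_concat'' {α : Type} (l : List α) :
    l = [] ∨ ∃ L b, l = L ++ [b] := by
  rcases l.eq_nil_or_concat with h | ⟨L, b, h⟩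
  · exact Or.inl h
  · exact Or.inr ⟨L, b, by simpa using h⟩

lemma lab_eq_of_heq (hh : IsHom h G G') {a b : V} (e : h a = h b) :
    G.lab a = G.lab b := by
  have ha := hh.1 a
  have hb := hh.1 b
  rw [e, hb] at ha
  exact ha.symm

lemma succ_map (hh : IsHom h G G') {k : ℕ} {a b : V} (s : G.Succ k a b) :
    G'.Succ k (h a) (h b) := by
  unfold TermGraph.Succ at *
  rw [hh.2.1 a, List.getElem?_map, s, Option.map_some]

lemma edge_map (hh : IsHom h G G') {a b : V} (m : G.Edge a b) :
    G'.Edge (h a) (h b) := by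
  unfold TermGraph.Edge at *
  rw [hh.2.1 a]
  exact List.mem_map_of_mem m

lemma reaches_map (hh : IsHom h G G') {a b : V} (r : G.Reaches a b) :
    G'.Reaches (h a) (h b) := by
  induction r with
  | refl => exact Relation.ReflTransGen.refl
  | tail _ hedge IH => exact Relation.ReflTransGen.tail IH (edge_map hh hedge)

lemma step_match (hh : IsHom h G G') {a u : V} (e : h u = h a) {k : ℕ} {b : V}
    (s : G.Succ k a b) : ∃ b', G.Succ k u b' ∧ h b' = h b := by
  have h1 : (G'.args (h u))[k]? = some (h b) := by rw [e]; exact succ_map hh s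
  rw [hh.2.1 u, List.getElem?_map] at h1
  cases hb' : (G.args u)[k]? with
  | none => rw [hb'] at h1; simp at h1
  | some b' =>
      rw [hb'] at h1
      exact ⟨b', hb', by simpa using h1⟩

lemma succ_lift (hh : IsHom h G G') {b' : V'} {k : ℕ} {w : V}
    (s : G'.Succ k (h w) b') : ∃ b, G.Succ k w b ∧ h b = b' := by
  unfold TermGraph.Succ at s
  rw [hh.2.1 w, List.getElem?_map] at s
  cases hb : (G.args w)[k]? with
  | none => rw [hb] at s; simp at s
  | some b =>
      rw [hb] at s
      exact ⟨b, hb, by simpa using s⟩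

lemma succ_of_edge {a b : V} (m : G.Edge a b) : ∃ k, G.Succ k a b :=
  List.mem_iff_getElem?.mp m

lemma edge_of_succ {k : ℕ} {a b : V} (s : G.Succ k a b) : G.Edge a b :=
  List.mem_of_getElem? s

lemma succ_bound {k : ℕ} {a b : V} (s : G.Succ k a b) : k < ar4 1 2 (G.lab a) := by
  rw [← G.args_len]
  exact (List.getElem?_eq_some_iff.mp s).1

lemma exists_succ1_del (ha : G.lab a = .del) : ∃ c, G.Succ 1 a c := by
  have hlen : 1 < (G.args a).length := by rw [G.args_len, ha]; simp [ar4]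
  exact ⟨(G.args a)[1], List.getElem?_eq_getElem hlen⟩

lemma P_step (hC : CorrectAP4 1 2 G P) {a b : V} (m : G.Edge a b) :
    P b = P a ++ [a] ∨ P b = P a ∨ ∃ x, P b ++ [x] = P a := by
  obtain ⟨k, hk⟩ := succ_of_edge m
  have hkb := succ_bound hk
  obtain ⟨c1, c2, c3, c4, c5, c6, c7⟩ := hC
  cases hl : G.lab a with
  | app => exact Or.inr (Or.inl (c3 a b k hl hk))
  | lam =>
      have hk0 : k = 0 := by rw [hl] at hkb; simp [ar4] at hkb; omega
      subst hk0
      exact Or.inl (c2 a b hl hk)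
  | var =>
      have hk0 : k = 0 := by rw [hl] at hkb; simp [ar4] at hkb; omega
      subst hk0
      obtain ⟨-, hp⟩ := c5 rfl a b hl hk
      exact Or.inr (Or.inr ⟨b, hp⟩)
  | del =>
      rw [hl] at hkb
      simp only [ar4] at hkb
      have : k = 0 ∨ k = 1 := by omega
      rcases this with rfl | rfl
      · exact Or.inr (Or.inr (c6 a b hl hk))
      · obtain ⟨-, hp⟩ := c7 rfl a b hl hk
        exact Or.inr (Or.inr ⟨b, hp⟩)

lemma nest (hC : CorrectAP4 1 2 G P) (w : V) :
    ∀ q v r, P w = q ++ v :: r → P v = q := by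
  have hre := G.reach w
  induction hre with
  | refl =>
      intro q v r hq
      rw [hC.1] at hq
      simp at hq
  | @tail b c _ hbc IH =>
      intro q v r hq
      rcases P_step hC hbc with hs | hs | ⟨x, hs⟩
      · rw [hs] at hq
        rcases eq_nil_or_concat'' r with rfl | ⟨r', y, rfl⟩
        · obtain ⟨h1, h2⟩ := concat_eq_concat' hq
          subst h2
          exact h1
        · have hq2 : P b ++ [b] = (q ++ v :: r') ++ [y] := by
            rw [hq]; simp
          obtain ⟨h1, h2⟩ := concat_eq_concat' hq2
          exact IH q v r' h1
      · rw [hs] at hq; exact IH q v r hq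
      · have hq2 : P b = q ++ v :: (r ++ [x]) := by rw [← hs, hq]; simp
        exact IH q v (r ++ [x]) hq2
lemma key_aux (hC : CorrectAP4 1 2 G P) (hB : FullyBackLinked G P) (hh : IsHom h G G')
    {n : ℕ}
    (IH : ∀ m, m < n → ∀ a b : V, (P a).length + (P b).length ≤ m → h a = h b →
      (P a).map h = (P b).map h)
    (w₁ w₂ : V) (hlen : (P w₁).length + (P w₂).length ≤ n) (he : h w₁ = h w₂)
    (p₂ : List V) (v₂ : V) (hw₂ : P w₂ = p₂ ++ [v₂]) :
    (P w₁).map h = (P w₂).map h := by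
  have hR : G.Reaches w₂ v₂ := hB w₂ v₂ p₂ hw₂
  have hnest : P v₂ = p₂ := nest hC w₂ p₂ v₂ [] (by simpa using hw₂)
  obtain ⟨c1, c2, c3, c4, c5, c6, c7⟩ := hC
  have dip : ∀ (b₁ b x₁ x : V), h b₁ = h b → h x₁ = h x →
      P b₁ ++ [x₁] = P w₁ → P b ++ [x] = P w₂ →
      (P w₁).map h = (P w₂).map h := by
    intro b₁ b x₁ x hbe hxe e1 e2
    have hlt : (P b₁).length + (P b).length < n := by
      have l1 := congrArg List.length e1
      have l2 := congrArg List.length e2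
      simp at l1 l2
      omega
    have hm : (P b₁).map h = (P b).map h := IH _ hlt b₁ b le_rfl hbe
    calc (P w₁).map h = (P b₁).map h ++ [h x₁] := by rw [← e1]; simp
      _ = (P b).map h ++ [h x] := by rw [hm, hxe]
      _ = (P w₂).map h := by rw [← e2]; simp
  have inner : ∀ a c : V, G.Reaches a c → ∀ u₁ s₁ s₂, h u₁ = h a →
      P u₁ = P w₁ ++ s₁ → P a = P w₂ ++ s₂ → s₁.map h = s₂.map h →
      ((P w₁).map h = (P w₂).map h) ∨
      (∃ u₁' s₁' s₂', h u₁' = h c ∧ P u₁' = P w₁ ++ s₁' ∧ P c = P w₂ ++ s₂' ∧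
        s₁'.map h = s₂'.map h) := by
    intro a c hr
    induction hr using Relation.ReflTransGen.head_induction_on with
    | refl =>
        intro u₁ s₁ s₂ e h1 h2 hs
        exact Or.inr ⟨u₁, s₁, s₂, e, h1, h2, hs⟩
    | @head a b hab hrest IHstep =>
        intro u₁ s₁ s₂ e h1 h2 hs
        obtain ⟨k, hk⟩ := succ_of_edge hab
        have hkb := succ_bound hk
        obtain ⟨b₁, hb₁k, hb₁e⟩ := step_match hh e hk
        have hlabeq : G.lab u₁ = G.lab a := lab_eq_of_heq hh e
        cases hl : G.lab a with
        | app =>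
            have hPb : P b = P a := c3 a b k hl hk
            have hPb₁ : P b₁ = P u₁ := c3 u₁ b₁ k (by rw [hlabeq, hl]) hb₁k
            exact IHstep b₁ s₁ s₂ hb₁e (by rw [hPb₁, h1]) (by rw [hPb, h2]) hs
        | lam =>
            have hk0 : k = 0 := by rw [hl] at hkb; simp [ar4] at hkb; omega
            subst hk0
            have hPb : P b = P a ++ [a] := c2 a b hl hk
            have hPb₁ : P b₁ = P u₁ ++ [u₁] := c2 u₁ b₁ (by rw [hlabeq, hl]) hb₁k
            refine IHstep b₁ (s₁ ++ [u₁]) (s₂ ++ [a]) hb₁e ?_ ?_ ?_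
            · rw [hPb₁, h1, List.append_assoc]
            · rw [hPb, h2, List.append_assoc]
            · simp [hs, e]
        | var =>
            have hk0 : k = 0 := by rw [hl] at hkb; simp [ar4] at hkb; omega
            subst hk0
            obtain ⟨-, hPb⟩ := c5 rfl a b hl hk
            obtain ⟨-, hPb₁⟩ := c5 rfl u₁ b₁ (by rw [hlabeq, hl]) hb₁k
            rcases eq_nil_or_concat'' s₂ with rfl | ⟨t₂, x₂, rfl⟩
            · have hs1 : s₁ = [] := by
                have hL := congrArg List.length hs
                simp at hL
                exact hL
              subst hs1
              rw [List.append_nil] at h1 h2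
              left
              exact dip b₁ b b₁ b hb₁e hb₁e (by rw [hPb₁]; exact h1)
                (by rw [hPb]; exact h2)
            · have hsne : s₁ ≠ [] := by
                intro hnil; rw [hnil] at hs; simp at hs
              obtain ⟨t₁, x₁, rfl⟩ := (eq_nil_or_concat'' s₁).resolve_left hsne
              have hts : t₁.map h = t₂.map h := by
                simp only [List.map_append, List.map_cons, List.map_nil] at hs
                exact (concat_eq_concat' hs).1
              have e2 : P b = P w₂ ++ t₂ := by
                have hq : P b ++ [b] = (P w₂ ++ t₂) ++ [x₂] := by rw [hPb, h2]; simp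
                exact (concat_eq_concat' hq).1
              have e1 : P b₁ = P w₁ ++ t₁ := by
                have hq : P b₁ ++ [b₁] = (P w₁ ++ t₁) ++ [x₁] := by rw [hPb₁, h1]; simp
                exact (concat_eq_concat' hq).1
              exact IHstep b₁ t₁ t₂ hb₁e e1 e2 hts
        | del =>
            rw [hl] at hkb
            simp only [ar4] at hkb
            have hk01 : k = 0 ∨ k = 1 := by omega
            rcases hk01 with rfl | rfl
            · obtain ⟨x, hPb⟩ := c6 a b hl hk
              obtain ⟨x₁, hPb₁⟩ := c6 u₁ b₁ (by rw [hlabeq, hl]) hb₁k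
              rcases eq_nil_or_concat'' s₂ with rfl | ⟨t₂, x₂, rfl⟩
              · have hs1 : s₁ = [] := by
                  have hL := congrArg List.length hs
                  simp at hL
                  exact hL
                subst hs1
                rw [List.append_nil] at h1 h2
                obtain ⟨cc, hcc⟩ := exists_succ1_del (G := G) hl
                obtain ⟨-, hPcc⟩ := c7 rfl a cc hl hcc
                obtain ⟨cc₁, hcc₁, hcce⟩ := step_match hh e hcc
                obtain ⟨-, hPcc₁⟩ := c7 rfl u₁ cc₁ (by rw [hlabeq, hl]) hcc₁
                have hx : cc = x := by
                  have hq : P cc ++ [cc] = P b ++ [x] := by rw [hPcc, hPb]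
                  exact (concat_eq_concat' hq).2
                have hx₁ : cc₁ = x₁ := by
                  have hq : P cc₁ ++ [cc₁] = P b₁ ++ [x₁] := by rw [hPcc₁, hPb₁]
                  exact (concat_eq_concat' hq).2
                left
                refine dip b₁ b x₁ x hb₁e ?_ (by rw [hPb₁]; exact h1)
                  (by rw [hPb]; exact h2)
                rw [← hx, ← hx₁]
                exact hcce
              · have hsne : s₁ ≠ [] := by
                  intro hnil; rw [hnil] at hs; simp at hs
                obtain ⟨t₁, x₁', rfl⟩ := (eq_nil_or_concat'' s₁).resolve_left hsne
                have hts : t₁.map h = t₂.map h := by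
                  simp only [List.map_append, List.map_cons, List.map_nil] at hs
                  exact (concat_eq_concat' hs).1
                have e2 : P b = P w₂ ++ t₂ := by
                  have hq : P b ++ [x] = (P w₂ ++ t₂) ++ [x₂] := by rw [hPb, h2]; simp
                  exact (concat_eq_concat' hq).1
                have e1 : P b₁ = P w₁ ++ t₁ := by
                  have hq : P b₁ ++ [x₁] = (P w₁ ++ t₁) ++ [x₁'] := by rw [hPb₁, h1]; simp
                  exact (concat_eq_concat' hq).1
                exact IHstep b₁ t₁ t₂ hb₁e e1 e2 hts
            · obtain ⟨-, hPb⟩ := c7 rfl a b hl hk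
              obtain ⟨-, hPb₁⟩ := c7 rfl u₁ b₁ (by rw [hlabeq, hl]) hb₁k
              rcases eq_nil_or_concat'' s₂ with rfl | ⟨t₂, x₂, rfl⟩
              · have hs1 : s₁ = [] := by
                  have hL := congrArg List.length hs
                  simp at hL
                  exact hL
                subst hs1
                rw [List.append_nil] at h1 h2
                left
                exact dip b₁ b b₁ b hb₁e hb₁e (by rw [hPb₁]; exact h1)
                  (by rw [hPb]; exact h2)
              · have hsne : s₁ ≠ [] := by
                  intro hnil; rw [hnil] at hs; simp at hs
                obtain ⟨t₁, x₁, rfl⟩ := (eq_nil_or_concat'' s₁).resolve_left hsne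
                have hts : t₁.map h = t₂.map h := by
                  simp only [List.map_append, List.map_cons, List.map_nil] at hs
                  exact (concat_eq_concat' hs).1
                have e2 : P b = P w₂ ++ t₂ := by
                  have hq : P b ++ [b] = (P w₂ ++ t₂) ++ [x₂] := by rw [hPb, h2]; simp
                  exact (concat_eq_concat' hq).1
                have e1 : P b₁ = P w₁ ++ t₁ := by
                  have hq : P b₁ ++ [b₁] = (P w₁ ++ t₁) ++ [x₁] := by rw [hPb₁, h1]; simp
                  exact (concat_eq_concat' hq).1
                exact IHstep b₁ t₁ t₂ hb₁e e1 e2 hts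
  rcases inner w₂ v₂ hR w₁ [] [] he (by simp) (by simp) rfl with goal | ⟨u₁', s₁', s₂', -, -, hPv₂, -⟩
  · exact goal
  · exfalso
    have hlenc := congrArg List.length hPv₂
    rw [hnest, hw₂] at hlenc
    simp at hlenc

lemma key (hC : CorrectAP4 1 2 G P) (hB : FullyBackLinked G P) (hh : IsHom h G G') :
    ∀ w₁ w₂ : V, h w₁ = h w₂ → (P w₁).map h = (P w₂).map h := by
  suffices H : ∀ n, ∀ w₁ w₂ : V, (P w₁).length + (P w₂).length ≤ n → h w₁ = h w₂ →
      (P w₁).map h = (P w₂).map h by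
    intro w₁ w₂ he
    exact H _ w₁ w₂ le_rfl he
  intro n
  induction n using Nat.strong_induction_on with
  | _ n IHn =>
    intro w₁ w₂ hlen he
    rcases eq_nil_or_concat'' (P w₂) with h2 | ⟨p₂, v₂, h2⟩
    · rcases eq_nil_or_concat'' (P w₁) with hh1 | ⟨p₁, v₁, hh1⟩
      · rw [hh1, h2]
      · exact (key_aux hC hB hh (fun m hm a b => IHn m hm a b) w₂ w₁ (by omega) he.symm
          p₁ v₁ hh1).symm
    · exact key_aux hC hB hh (fun m hm a b => IHn m hm a b) w₁ w₂ hlen he p₂ v₂ h2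

lemma hom_surj (hh : IsHom h G G') (v' : V') : ∃ v, h v = v' := by
  have hre := G'.reach v'
  induction hre with
  | refl => exact ⟨G.root, hh.2.2⟩
  | @tail b c _ hedge IH =>
      obtain ⟨a, ha⟩ := IH
      rw [← ha, hh.2.1] at hedge
      obtain ⟨v, _, hve⟩ := List.mem_map.mp hedge
      exact ⟨v, hve⟩

lemma eager_fbl (hE : EagerScope G P) : FullyBackLinked G P := by
  intro w v p hp
  obtain ⟨n, u, hu0, hedge, hsucc, -, -⟩ := hE w v p hp
  have hreach : ∀ m : ℕ, ∀ hm : m ≤ n, G.Reaches w (u ⟨m, Nat.lt_succ_of_le hm⟩) := by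
    intro m
    induction m with
    | zero =>
        intro _
        have h0 : (⟨0, Nat.lt_succ_of_le (Nat.zero_le n)⟩ : Fin (n+1)) = 0 := rfl
        rw [h0, hu0]
        exact Relation.ReflTransGen.refl
    | succ m IHm =>
        intro hm
        have h1 := IHm (Nat.le_of_succ_le hm)
        refine Relation.ReflTransGen.tail h1 ?_
        have he := hedge ⟨m, hm⟩
        exact he
  have hlast := hreach n le_rfl
  exact Relation.ReflTransGen.tail hlast (edge_of_succ hsucc)

lemma main1 (G : TermGraph Lab4 (ar4 1 2) V) (P : V → List V)
    (hC : CorrectAP4 1 2 G P) (hB : FullyBackLinked G P)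
    (G' : TermGraph Lab4 (ar4 1 2) V') (h : V → V') (hh : IsHom h G G') :
    ∃ P' : V' → List V', CorrectAP4 1 2 G' P' ∧ FullyBackLinked G' P' ∧
      (EagerScope G P → EagerScope G' P') := by
  classical
  have hsurj : ∀ v', ∃ v, h v = v' := hom_surj hh
  set pk : V' → V := fun v' => (hsurj v').choose with hpkdef
  have hpk : ∀ v', h (pk v') = v' := fun v' => (hsurj v').choose_spec
  refine ⟨fun v' => (P (pk v')).map h, ?_, ?_, ?_⟩
  · -- CorrectAP4
    obtain ⟨c1, c2, c3, c4, c5, c6, c7⟩ := hC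
    have hPv : ∀ v : V, (P (pk (h v))).map h = (P v).map h := fun v =>
      key ⟨c1, c2, c3, c4, c5, c6, c7⟩ hB hh (pk (h v)) v (hpk (h v))
    refine ⟨?_, ?_, ?_, ?_, ?_, ?_, ?_⟩
    · have hroot : G'.root = h G.root := hh.2.2.symm
      beta_reduce
      rw [hroot, hPv, c1, List.map_nil]
    · intro w' w₀' hl hs
      obtain ⟨w, rfl⟩ := hsurj w'
      obtain ⟨b, hb, rfl⟩ := succ_lift hh hs
      have hlw : G.lab w = .lam := by rw [← hh.1 w]; exact hl
      have hp := c2 w b hlw hb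
      beta_reduce
      rw [hPv, hPv, hp]
      simp
    · intro w' wk' k hl hs
      obtain ⟨w, rfl⟩ := hsurj w'
      obtain ⟨b, hb, rfl⟩ := succ_lift hh hs
      have hlw : G.lab w = .app := by rw [← hh.1 w]; exact hl
      have hp := c3 w b k hlw hb
      beta_reduce
      rw [hPv, hPv, hp]
    · intro w' hl
      obtain ⟨w, rfl⟩ := hsurj w'
      have hlw : G.lab w = .var := by rw [← hh.1 w]; exact hl
      beta_reduce
      rw [hPv]
      simpa using c4 w hlw
    · intro _ w' w₀' hl hs
      obtain ⟨w, rfl⟩ := hsurj w'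
      obtain ⟨b, hb, rfl⟩ := succ_lift hh hs
      have hlw : G.lab w = .var := by rw [← hh.1 w]; exact hl
      obtain ⟨hbl, hp⟩ := c5 rfl w b hlw hb
      constructor
      · rw [hh.1]; exact hbl
      · beta_reduce
        rw [hPv, hPv, ← hp]
        simp
    · intro w' w₀' hl hs
      obtain ⟨w, rfl⟩ := hsurj w'
      obtain ⟨b, hb, rfl⟩ := succ_lift hh hs
      have hlw : G.lab w = .del := by rw [← hh.1 w]; exact hl
      obtain ⟨x, hp⟩ := c6 w b hlw hb
      refine ⟨h x, ?_⟩
      beta_reduce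
      rw [hPv, hPv, ← hp]
      simp
    · intro _ w' w₁' hl hs
      obtain ⟨w, rfl⟩ := hsurj w'
      obtain ⟨b, hb, rfl⟩ := succ_lift hh hs
      have hlw : G.lab w = .del := by rw [← hh.1 w]; exact hl
      obtain ⟨hbl, hp⟩ := c7 rfl w b hlw hb
      constructor
      · rw [hh.1]; exact hbl
      · beta_reduce
        rw [hPv, hPv, ← hp]
        simp
  · -- FullyBackLinked
    intro w' v' p' hp'
    beta_reduce at hp'
    rcases eq_nil_or_concat'' (P (pk w')) with hnil | ⟨q, v, hq⟩
    · rw [hnil] at hp'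
      simp at hp'
    · rw [hq] at hp'
      simp only [List.map_append, List.map_cons, List.map_nil] at hp'
      obtain ⟨-, hv⟩ := concat_eq_concat' hp'
      have hr : G.Reaches (pk w') v := hB _ v q hq
      have hr' := reaches_map hh hr
      rw [hpk w', hv] at hr'
      exact hr'
  · -- EagerScope
    intro hE w' v' p' hp'
    beta_reduce at hp'
    have hPv : ∀ v : V, (P (pk (h v))).map h = (P v).map h := fun v =>
      key hC hB hh (pk (h v)) v (hpk (h v))
    rcases eq_nil_or_concat'' (P (pk w')) with hnil | ⟨q, v, hq⟩
    · rw [hnil] at hp'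
      simp at hp'
    · have hv : h v = v' := by
        rw [hq] at hp'
        simp only [List.map_append, List.map_cons, List.map_nil] at hp'
        exact (concat_eq_concat' hp').2
      obtain ⟨N, u, hu0, hedge, hsucc, hlab, hpre⟩ := hE (pk w') v q hq
      refine ⟨N, fun m => h (u m), ?_, ?_, ?_, ?_, ?_⟩
      · show h (u 0) = w'
        rw [hu0, hpk]
      · intro m
        exact edge_map hh (hedge m)
      · show G'.Succ 0 (h (u (Fin.last N))) v'
        rw [← hv]
        exact succ_map hh hsucc
      · show G'.lab (h (u (Fin.last N))) = Lab4.var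
        rw [hh.1]
        exact hlab
      · intro m hm
        have hpref := hpre m hm
        have h3 : (P (pk (h (u m)))).map h = (P (u m)).map h := hPv _
        show (P (pk w')).map h <+: (P (pk (h (u m)))).map h
        rw [h3]
        exact hpref.map h

end Proofs

/-- Theorem 7.3 and Corollary 7.4: if G is a fully back-linked λ-term-graph over
    Σλ^{1,2} and h a homomorphism from G to a Σλ^{1,2}-term-graph G', then G' is again
    a fully back-linked λ-term-graph, and if G is moreover eager-scope then so is G'.
    Consequently the class of eager-scope λ-term-graphs over Σλ^{1,2} is closed under
    functional bisimulation. -/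


theorem ltg_preservation_under_hom_and_eager_closedness :
    (∀ (V V' : Type) (G : TermGraph Lab4 (ar4 1 2) V) (P : V → List V),
      CorrectAP4 1 2 G P → FullyBackLinked G P →
      ∀ (G' : TermGraph Lab4 (ar4 1 2) V') (h : V → V'),
        IsHom h G G' →
        ∃ P' : V' → List V',
          CorrectAP4 1 2 G' P' ∧ FullyBackLinked G' P' ∧
          (EagerScope G P → EagerScope G' P')) ∧
    (∀ (V V' : Type) (G : TermGraph Lab4 (ar4 1 2) V) (P : V → List V),
      CorrectAP4 1 2 G P → EagerScope G P →
      ∀ (G' : TermGraph Lab4 (ar4 1 2) V') (h : V → V'),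
        IsHom h G G' →
        ∃ P' : V' → List V', CorrectAP4 1 2 G' P' ∧ EagerScope G' P') := by
  constructor
  · intro V V' G P hC hB G' h hh
    exact main1 G P hC hB G' h hh
  · intro V V' G P hC hE G' h hh
    obtain ⟨P', hC', -, hEimp⟩ := main1 G P hC (eager_fbl hE) G' h hh
    exact ⟨P', hC', hEimp hE⟩
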